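/- For every m ≥ 1: (1) the first occurrence of E_{m,1} in the doubling sequence D∞ starts at position 1 (i.e., E_{m,1} is a prefix of D∞ and the prefix of D∞ preceding its first occurrence is empty); (2) the first occurrence of E_{m,2} in D∞ starts at position 2^m+1 (i.e., the prefix of D∞ preceding its first occurrence equals A_m). -/

import Mathlib

namespace PD

/-- The period-doubling substitution on the alphabet `Bool`,
where `false` stands for the letter `a` and `true` for the letter `b`:
`σ(a) = ab`, `σ(b) = aa`. -/
def sub : Bool → List Bool
  | false => [false, true]
  | true  => [false, false]

/-- The substitution applied to a finite word. -/
def subW (w : List Bool) : List Bool := w.flatMap sub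

/-- `A m = σ^m(a)`. -/
def A (m : ℕ) : List Bool := subW^[m] [false]

/-- `B m = σ^m(b)`. -/
def B (m : ℕ) : List Bool := subW^[m] [true]

/-- The doubling sequence `D∞` (0-indexed: `D n` is the `(n+1)`-th letter),
the fixed point of `σ` beginning with `a`; `A m` is a prefix of `A (m+1)`,
and `A (n+1)` has length `2^(n+1) > n`. -/
def D (n : ℕ) : Bool := (A (n + 1)).getD n false

/-- `δ m`, the last letter of `A m`. -/
def delta (m : ℕ) : Bool := (A m).getLastD false

/-- The envelope words (`i ∈ {1,2}`): `E m 1 = A m` minus its last letter,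
`E m 2 = A (m-1) ++ (A m` minus its last letter `)`. -/
def E (m i : ℕ) : List Bool :=
  if i = 1 then (A m).dropLast else A (m - 1) ++ (A m).dropLast

/-- `w` occurs at the (1-indexed) position `j` in the finite word `τ`. -/
def OccursIn (w τ : List Bool) (j : ℕ) : Prop :=
  1 ≤ j ∧ (τ.drop (j - 1)).take w.length = w

/-- `w` occurs at the (1-indexed) position `j` in the doubling sequence. -/
def OccursD (w : List Bool) (j : ℕ) : Prop :=
  1 ≤ j ∧ ∀ k < w.length, D (j - 1 + k) = w.getD k false

/-- `w` is a factor of the doubling sequence. -/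
def FactorD (w : List Bool) : Prop := ∃ j, OccursD w j

/-- `L w p`: the (1-indexed) starting position of the `p`-th occurrence of `w`
in the doubling sequence, occurrences being ordered by starting position.
(Each factor occurs infinitely often, so `Nat.nth` enumerates all occurrences
in increasing order.) -/
noncomputable def L (w : List Bool) (p : ℕ) : ℕ := Nat.nth (OccursD w) (p - 1)

/-- The strict total order on envelope words:
`E m₁ i₁ ⊏ E m₂ i₂` iff `m₁ < m₂`, or `m₁ = m₂` and `i₁ < i₂`. -/
def EnvLt (m₁ i₁ m₂ i₂ : ℕ) : Prop := m₁ < m₂ ∨ (m₁ = m₂ ∧ i₁ < i₂)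

/-- `Env(w) = E m i`: the envelope word `E m i` is the `⊏`-minimal envelope
word containing `w` as a factor. -/
def IsEnv (w : List Bool) (m i : ℕ) : Prop :=
  1 ≤ m ∧ (i = 1 ∨ i = 2) ∧ w <:+: E m i ∧
    ∀ m' i', 1 ≤ m' → (i' = 1 ∨ i' = 2) → EnvLt m' i' m i → ¬ w <:+: E m' i'

/-- The substitution `φ₁(a) = a`, `φ₁(b) = bb`. -/
def phi1 : Bool → List Bool
  | false => [false]
  | true  => [true, true]

/-- `Θ₁ = φ₁(D∞)` (0-indexed): `φ₁(A (n+1))` is a prefix of `Θ₁` of length `> n`. -/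
def Theta1 (n : ℕ) : Bool := ((A (n + 1)).flatMap phi1).getD n false

/-- The substitution `φ₂(a) = ab`, `φ₂(b) = acac`, over the alphabet `Fin 3`
where `0` stands for `a`, `1` for `b` and `2` for `c`. -/
def phi2 : Bool → List (Fin 3)
  | false => [0, 1]
  | true  => [0, 2, 0, 2]

/-- `Θ₂ = φ₂(D∞)` (0-indexed). -/
def Theta2 (n : ℕ) : Fin 3 := ((A (n + 1)).flatMap phi2).getD n 0

/-- `N₁(x,p)`: the number of letters `x` among the first `p` letters of `Θ₁`. -/
def N1 (x : Bool) (p : ℕ) : ℕ := ((List.range p).map Theta1).count x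

/-- `N₂(x,p)`: the number of letters `x` among the first `p` letters of `Θ₂`. -/
def N2 (x : Fin 3) (p : ℕ) : ℕ := ((List.range p).map Theta2).count x

end PD

namespace PD

lemma subW_append (u v : List Bool) : subW (u ++ v) = subW u ++ subW v := by
  simp [subW]

lemma subW_cons (x : Bool) (u : List Bool) : subW (x :: u) = sub x ++ subW u := rfl

lemma A_succ (m : ℕ) : A (m + 1) = subW (A m) := Function.iterate_succ_apply' _ _ _

lemma B_succ (m : ℕ) : B (m + 1) = subW (B m) := Function.iterate_succ_apply' _ _ _

lemma length_subW (u : List Bool) : (subW u).length = 2 * u.length := by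
  induction u with
  | nil => rfl
  | cons x u ih => cases x <;> simp [subW_cons, sub, ih] <;> omega

lemma length_A (m : ℕ) : (A m).length = 2 ^ m := by
  induction m with
  | zero => rfl
  | succ n ih => rw [A_succ, length_subW, ih, pow_succ]; ring

lemma length_B (m : ℕ) : (B m).length = 2 ^ m := by
  induction m with
  | zero => rfl
  | succ n ih => rw [B_succ, length_subW, ih, pow_succ]; ring

lemma A_eq (m : ℕ) : A (m + 1) = A m ++ B m := by
  induction m with
  | zero => rfl
  | succ n ih => rw [A_succ, ih, subW_append, ← A_succ, ← B_succ, ← ih]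

lemma B_eq (m : ℕ) : B (m + 1) = A m ++ A m := by
  induction m with
  | zero => rfl
  | succ n ih => rw [B_succ, ih, subW_append, ← A_succ]

lemma A_prefix_succ (m : ℕ) : A m <+: A (m + 1) := ⟨B m, (A_eq m).symm⟩

lemma A_prefix {m M : ℕ} (h : m ≤ M) : A m <+: A M := by
  induction h with
  | refl => exact List.prefix_refl _
  | step _ ih => exact ih.trans (A_prefix_succ _)

lemma getD_prefix {u v : List Bool} (h : u <+: v) {k : ℕ} (hk : k < u.length) :
    v.getD k false = u.getD k false := by
  obtain ⟨w, rfl⟩ := h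
  exact List.getD_append u w false k hk

lemma D_eq {M n : ℕ} (hn : n < 2 ^ M) : D n = (A M).getD n false := by
  have hn1 : n < (A (n + 1)).length := by
    rw [length_A]
    exact ((Nat.lt_two_pow_self (n := n))).trans_le (Nat.pow_le_pow_right (by norm_num) (Nat.le_succ n))
  rcases le_total (n + 1) M with h | h
  · exact (getD_prefix (A_prefix h) hn1).symm
  · exact getD_prefix (A_prefix h) (by rwa [length_A])

lemma subW_getD_even (u : List Bool) : ∀ i < u.length,
    (subW u).getD (2 * i) false = false := by
  induction u with
  | nil => intro i hi; simp at hi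
  | cons x u ih =>
    intro i hi
    cases i with
    | zero => cases x <;> rfl
    | succ j =>
      have h2 : (sub x).length = 2 := by cases x <;> rfl
      rw [subW_cons, List.getD_append_right _ _ _ _ (by rw [h2]; omega), h2,
        show 2 * (j + 1) - 2 = 2 * j from by omega]
      exact ih j (by simpa using hi)

lemma subW_getD_odd (u : List Bool) : ∀ i < u.length,
    (subW u).getD (2 * i + 1) false = !(u.getD i false) := by
  induction u with
  | nil => intro i hi; simp at hi
  | cons x u ih =>
    intro i hi
    cases i with
    | zero => cases x <;> rfl
    | succ j =>
      have h2 : (sub x).length = 2 := by cases x <;> rfl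
      rw [subW_cons, List.getD_append_right _ _ _ _ (by rw [h2]; omega), h2,
        show 2 * (j + 1) + 1 - 2 = 2 * j + 1 from by omega,
        ih j (by simpa using hi), List.getD_cons_succ]

lemma D_even (k : ℕ) : D (2 * k) = false := by
  have hk := (Nat.lt_two_pow_self (n := k))
  have h4 : (2 : ℕ) ^ (k + 2) = 4 * 2 ^ k := by ring
  have h2 : (2 : ℕ) ^ (k + 1) = 2 * 2 ^ k := by ring
  rw [D_eq (show 2 * k < 2 ^ (k + 2) from by omega), A_succ]
  exact subW_getD_even _ k (by rw [length_A]; omega)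

lemma D_odd (k : ℕ) : D (2 * k + 1) = !(D k) := by
  have hk := (Nat.lt_two_pow_self (n := k))
  have h4 : (2 : ℕ) ^ (k + 2) = 4 * 2 ^ k := by ring
  have h2 : (2 : ℕ) ^ (k + 1) = 2 * 2 ^ k := by ring
  rw [D_eq (show 2 * k + 1 < 2 ^ (k + 2) from by omega), A_succ,
    subW_getD_odd _ k (by rw [length_A]; omega)]
  rfl

lemma A_ne_nil (m : ℕ) : A m ≠ [] := by
  apply List.ne_nil_of_length_pos
  rw [length_A]
  positivity

lemma B_ne_nil (m : ℕ) : B m ≠ [] := by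
  apply List.ne_nil_of_length_pos
  rw [length_B]
  positivity

lemma dropLast_AB (m : ℕ) : (A m).dropLast = (B m).dropLast := by
  induction m with
  | zero => rfl
  | succ n ih =>
    rw [A_eq, B_eq, List.dropLast_append_of_ne_nil (l' := A n) (B_ne_nil n),
      List.dropLast_append_of_ne_nil (l' := A n) (A_ne_nil n), ih]

lemma prefix_append_left (u : List Bool) {v w : List Bool} (h : v <+: w) :
    u ++ v <+: u ++ w := by
  obtain ⟨t, rfl⟩ := h
  exact ⟨t, by rw [List.append_assoc]⟩

lemma subW_prefix {u v : List Bool} (h : u <+: v) : subW u <+: subW v := by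
  obtain ⟨t, rfl⟩ := h
  exact ⟨subW t, (subW_append u t).symm⟩

lemma E2_eq (n : ℕ) : E (n + 1) 2 = A n ++ (A (n + 1)).dropLast := by simp [E]

lemma length_E2 (n : ℕ) : (E (n + 1) 2).length = 2 ^ n + (2 ^ (n + 1) - 1) := by
  rw [E2_eq, List.length_append, List.length_dropLast, length_A, length_A]

lemma subW_E2_prefix (n : ℕ) : subW (E (n + 1) 2) <+: E (n + 2) 2 := by
  rw [E2_eq, E2_eq, subW_append, ← A_succ]
  apply prefix_append_left
  have h1 : subW ((A (n + 1)).dropLast) <+: A (n + 2) := by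
    rw [A_succ (n + 1)]
    exact subW_prefix (List.dropLast_prefix _)
  apply List.prefix_of_prefix_length_le h1 (List.dropLast_prefix _)
  rw [length_subW, List.length_dropLast, List.length_dropLast, length_A, length_A]
  have h2 : (2 : ℕ) ^ (n + 2) = 2 * 2 ^ (n + 1) := by ring
  have h3 : (0 : ℕ) < 2 ^ (n + 1) := by positivity
  omega

lemma dropLast_A_succ (n : ℕ) : (A (n + 1)).dropLast = A n ++ (A n).dropLast := by
  rw [A_eq n, List.dropLast_append_of_ne_nil (l' := A n) (B_ne_nil n), ← dropLast_AB]

lemma prefix_occ (n : ℕ) : A (n + 1) ++ E (n + 1) 2 <+: A (n + 3) := by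
  have h3 : A (n + 3) = A (n + 1) ++ (A n ++ (A n ++ (A (n + 1) ++ A (n + 1)))) := by
    rw [A_eq (n + 2), A_eq (n + 1), B_eq (n + 1), B_eq n]
    simp [List.append_assoc]
  rw [h3, E2_eq, dropLast_A_succ]
  apply prefix_append_left
  apply prefix_append_left
  apply prefix_append_left
  exact (List.dropLast_prefix _).trans ((A_prefix_succ n).trans (List.prefix_append _ _))

lemma occ_pos (n : ℕ) : ∀ k < (E (n + 1) 2).length,
    D (2 ^ (n + 1) + k) = (E (n + 1) 2).getD k false := by
  intro k hk
  have hE := length_E2 n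
  have h1 : (0 : ℕ) < 2 ^ n := by positivity
  have he1 : (2 : ℕ) ^ (n + 1) = 2 * 2 ^ n := by ring
  have he3 : (2 : ℕ) ^ (n + 3) = 8 * 2 ^ n := by ring
  have hlt : 2 ^ (n + 1) + k < 2 ^ (n + 3) := by omega
  rw [D_eq hlt, getD_prefix (prefix_occ n) (by rw [List.length_append, length_A]; omega),
    List.getD_append_right _ _ _ _ (by rw [length_A]; omega), length_A,
    Nat.add_sub_cancel_left]

lemma getD1_A {m : ℕ} (hm : 1 ≤ m) : (A m).getD 1 false = true := by
  have h := getD_prefix (A_prefix hm) (k := 1) (by rw [length_A]; norm_num)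
  rw [h]
  rfl

lemma not_occ (m : ℕ) (hm : 1 ≤ m) : ∀ t < 2 ^ m,
    ¬ ∀ k < (E m 2).length, D (t + k) = (E m 2).getD k false := by
  induction m, hm using Nat.le_induction with
  | base =>
    intro t ht h
    have hE : E 1 2 = [false, false] := rfl
    have hD1 : D 1 = true := rfl
    have hf : D 1 = false := by
      interval_cases t
      · simpa [hE] using h 1 (by simp [hE])
      · simpa [hE] using h 0 (by simp [hE])
    rw [hD1] at hf
    exact Bool.noConfusion hf
  | succ m hm ih =>
    obtain ⟨n, rfl⟩ : ∃ n, m = n + 1 := ⟨m - 1, by omega⟩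
    intro t ht h
    have hlenE := length_E2 (n + 1)
    have h1p : (0 : ℕ) < 2 ^ (n + 1) := by positivity
    have he2 : (2 : ℕ) ^ (n + 2) = 2 * 2 ^ (n + 1) := by ring
    -- the letter at index 1 of the occurrence is `b`
    have h1 : D (t + 1) = true := by
      have hx := h 1 (by omega)
      rw [E2_eq, List.getD_append _ _ _ 1 (by rw [length_A]; omega)] at hx
      rw [hx, getD1_A (by omega)]
    -- the starting index is even
    obtain ⟨s, rfl⟩ : ∃ s, t = 2 * s := by
      rcases Nat.even_or_odd t with he | ho
      · obtain ⟨s, hs⟩ := he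
        exact ⟨s, by omega⟩
      · exfalso
        obtain ⟨s, rfl⟩ := ho
        have hev := D_even (s + 1)
        rw [show 2 * s + 1 + 1 = 2 * (s + 1) from by ring, hev] at h1
        exact Bool.noConfusion h1
    have hs : s < 2 ^ (n + 1) := by omega
    apply ih s hs
    intro i hi
    have hle : (subW (E (n + 1) 2)).length ≤ (E (n + 2) 2).length :=
      (subW_E2_prefix n).length_le
    have h2i : 2 * i + 1 < (subW (E (n + 1) 2)).length := by
      rw [length_subW]; omega
    have hk := h (2 * i + 1) (lt_of_lt_of_le h2i hle)
    rw [show 2 * s + (2 * i + 1) = 2 * (s + i) + 1 from by ring, D_odd,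
      getD_prefix (subW_E2_prefix n) h2i, subW_getD_odd _ i hi] at hk
    exact Bool.not_inj hk

end PD

open PD
/-- For every `m ≥ 1`: (1) the first occurrence of `E m 1` in the doubling
sequence starts at position `1` (it is a prefix, with empty preceding prefix);
(2) the first occurrence of `E m 2` starts at position `2^m + 1` (the preceding
prefix of the doubling sequence is `A m`). -/
theorem doubling_first_occurrence (m : ℕ) (hm : 1 ≤ m) :
    (OccursD (E m 1) 1 ∧ L (E m 1) 1 = 1) ∧
      (OccursD (E m 2) (2 ^ m + 1) ∧ (∀ j, OccursD (E m 2) j → 2 ^ m + 1 ≤ j) ∧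
        L (E m 2) 1 = 2 ^ m + 1) := by
  obtain ⟨n, rfl⟩ : ∃ n, m = n + 1 := ⟨m - 1, by omega⟩
  have occ1 : OccursD (E (n + 1) 1) 1 := by
    refine ⟨le_refl 1, ?_⟩
    intro k hk
    have hE : E (n + 1) 1 = (A (n + 1)).dropLast := by simp [E]
    rw [hE] at hk ⊢
    have hk2 : k < 2 ^ (n + 1) := by
      rw [List.length_dropLast, length_A] at hk; omega
    rw [show (1 : ℕ) - 1 + k = k from by omega]
    calc D k = (A (n + 1)).getD k false := D_eq hk2
      _ = ((A (n + 1)).dropLast).getD k false :=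
        getD_prefix (List.dropLast_prefix _) hk
  have occ2 : OccursD (E (n + 1) 2) (2 ^ (n + 1) + 1) := by
    refine ⟨Nat.succ_le_succ (Nat.zero_le _), ?_⟩
    intro k hk
    rw [show 2 ^ (n + 1) + 1 - 1 + k = 2 ^ (n + 1) + k from by simp]
    exact occ_pos n k hk
  have lb : ∀ j, OccursD (E (n + 1) 2) j → 2 ^ (n + 1) + 1 ≤ j := by
    rintro j ⟨hj1, hocc⟩
    by_contra hc
    push_neg at hc
    exact not_occ (n + 1) (by omega) (j - 1) (by omega)
      (fun k hk => by rw [← hocc k hk])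
  have hL1 : L (E (n + 1) 1) 1 = 1 := by
    rw [L, show (1 : ℕ) - 1 = 0 from rfl, Nat.nth_zero]
    refine le_antisymm (Nat.sInf_le ?_) ?_
    · exact occ1
    · have hne : (setOf (OccursD (E (n + 1) 1))).Nonempty := ⟨1, occ1⟩
      exact (Nat.sInf_mem hne).1
  have hL2 : L (E (n + 1) 2) 1 = 2 ^ (n + 1) + 1 := by
    rw [L, show (1 : ℕ) - 1 = 0 from rfl, Nat.nth_zero]
    refine le_antisymm (Nat.sInf_le ?_) ?_
    · exact occ2
    · have hne : (setOf (OccursD (E (n + 1) 2))).Nonempty := ⟨_, occ2⟩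
      exact lb _ (by exact Nat.sInf_mem hne)
  exact ⟨⟨occ1, hL1⟩, occ2, lb, hL2⟩
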